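/- arXiv:1904.00574 — 2 statements merged into one kernel-verified Lean document; each statement's English description precedes it below -/
import Mathlib

section
/- Let 1 ≤ p < ∞, 1 ≤ s < ∞ with p < s. Suppose {Q_j} are dyadic cubes, a_j ∈ M^s_1(ℝ^n) with supp(a_j) ⊂ Q_j, and λ_j ≥ 0 with ‖Σ_j λ_j χ_{Q_j}‖_{M^p_1} < ∞. Then f = Σ_j λ_j a_j satisfies ‖f‖_{M^p_1} ≲ ‖Σ_j λ_j (‖a_j‖_{M^s_1}/|Q_j|^{1/s}) χ_{Q_j}‖_{M^p_1}. -/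
open MeasureTheory Metric ENNReal

noncomputable section

abbrev E (n : ℕ) := EuclideanSpace ℝ (Fin n)

/-- Half-open axis-parallel cube with corner `a` and side length `r`. -/
def Cube (n : ℕ) (a : Fin n → ℝ) (r : ℝ) : Set (E n) :=
  {y | ∀ i, a i ≤ y i ∧ y i < a i + r}

/-- The dyadic cube `2^{-l}(k + [0,1)^n)`. -/
def DyadicCube (n : ℕ) (l : ℤ) (k : Fin n → ℤ) : Set (E n) :=
  Cube n (fun i => (k i : ℝ) * 2 ^ (-l)) (2 ^ (-l))

/-- The concentric triple `3Q` of the dyadic cube `Q`. -/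
def Triple (n : ℕ) (l : ℤ) (k : Fin n → ℤ) : Set (E n) :=
  Cube n (fun i => ((k i : ℝ) - 1) * 2 ^ (-l)) (3 * 2 ^ (-l))

/-- `L^q` norm of a nonnegative function over a set `S`. -/
def lqNorm {n : ℕ} (q : ℝ) (S : Set (E n)) (f : E n → ℝ≥0∞) : ℝ≥0∞ :=
  (∫⁻ x in S, f x ^ q) ^ (1 / q)

/-- Morrey norm: supremum over all cubes. -/
def morreyNorm (n : ℕ) (p q : ℝ) (f : E n → ℝ≥0∞) : ℝ≥0∞ :=
  ⨆ (a : Fin n → ℝ) (r : ℝ) (_ : 0 < r),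
    volume (Cube n a r) ^ (1 / p - 1 / q) * lqNorm q (Cube n a r) f

/-- Morrey norm: supremum over dyadic cubes. -/
def morreyNormDyadic (n : ℕ) (p q : ℝ) (f : E n → ℝ≥0∞) : ℝ≥0∞ :=
  ⨆ (l : ℤ) (k : Fin n → ℤ),
    volume (DyadicCube n l k) ^ (1 / p - 1 / q) * lqNorm q (DyadicCube n l k) f

/-- Bilinear fractional integral of Grafakos/Kenig–Stein type. -/
def Jalpha (n : ℕ) (α : ℝ) (f₁ f₂ : E n → ℝ≥0∞) (x : E n) : ℝ≥0∞ :=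
  ∫⁻ y, f₁ (x + y) * f₂ (x - y) * ENNReal.ofReal (‖y‖ ^ (α - n))

/-- Centered Hardy–Littlewood maximal operator. -/
def HLMax (n : ℕ) (f : E n → ℝ≥0∞) (x : E n) : ℝ≥0∞ :=
  ⨆ (R : ℝ) (_ : 0 < R), (volume (ball x R))⁻¹ * ∫⁻ y in ball x R, f y

/-- Powered Hardy–Littlewood maximal operator `M^{(v)}`. -/
def powMax (n : ℕ) (v : ℝ) (f : E n → ℝ≥0∞) (x : E n) : ℝ≥0∞ :=
  ⨆ (R : ℝ) (_ : 0 < R), ((volume (ball x R))⁻¹ * ∫⁻ y in ball x R, f y ^ v) ^ (1 / v)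

/-- Cube centered at `x` of side length `2r`. -/
def CCube (n : ℕ) (x : E n) (r : ℝ) : Set (E n) :=
  {y | ∀ i, x i - r ≤ y i ∧ y i ≤ x i + r}

/-! ### Auxiliary lemmas -/

/-- General half-open box. -/
def MDBox (n : ℕ) (c e : Fin n → ℝ) : Set (E n) := {y | ∀ i, c i ≤ y i ∧ y i < e i}

lemma MDBox_eq_preimage (n : ℕ) (c e : Fin n → ℝ) :
    MDBox n c e = (MeasurableEquiv.toLp 2 (Fin n → ℝ)).symm ⁻¹'
      (Set.univ.pi fun i => Set.Ico (c i) (e i)) := by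
  ext x
  simp [MDBox, Set.mem_pi, MeasurableEquiv.coe_toLp_symm, Set.mem_Ico]

lemma measurableSet_MDBox (n : ℕ) (c e : Fin n → ℝ) : MeasurableSet (MDBox n c e) := by
  rw [MDBox_eq_preimage]
  exact (MeasurableEquiv.toLp 2 (Fin n → ℝ)).symm.measurable
    (MeasurableSet.univ_pi fun i => measurableSet_Ico)

lemma volume_MDBox (n : ℕ) (c e : Fin n → ℝ) :
    volume (MDBox n c e) = ∏ i, ENNReal.ofReal (e i - c i) := by
  rw [MDBox_eq_preimage]
  rw [(EuclideanSpace.volume_preserving_symm_measurableEquiv_toLp (Fin n)).measure_preimage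
    ((MeasurableSet.univ_pi fun i => measurableSet_Ico).nullMeasurableSet)]
  simp [volume_pi_pi, Real.volume_Ico]

lemma cube_eq_MDBox (n : ℕ) (a : Fin n → ℝ) (r : ℝ) :
    Cube n a r = MDBox n a (fun i => a i + r) := rfl

lemma measurableSet_cube (n : ℕ) (a : Fin n → ℝ) (r : ℝ) : MeasurableSet (Cube n a r) :=
  measurableSet_MDBox n a _

lemma volume_cube (n : ℕ) (a : Fin n → ℝ) (r : ℝ) :
    volume (Cube n a r) = ENNReal.ofReal r ^ n := by
  rw [cube_eq_MDBox, volume_MDBox]; simp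

lemma measurableSet_dyadic (n : ℕ) (l : ℤ) (k : Fin n → ℤ) :
    MeasurableSet (DyadicCube n l k) := measurableSet_cube _ _ _

lemma volume_dyadic (n : ℕ) (l : ℤ) (k : Fin n → ℤ) :
    volume (DyadicCube n l k) = ENNReal.ofReal ((2:ℝ) ^ (-l)) ^ n := volume_cube _ _ _

lemma lqNorm_one {n : ℕ} (S : Set (E n)) (f : E n → ℝ≥0∞) :
    lqNorm 1 S f = ∫⁻ x in S, f x := by simp [lqNorm]

lemma vol_cube_pos {n : ℕ} {r : ℝ} (hr : 0 < r) (a : Fin n → ℝ) :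
    volume (Cube n a r) ≠ 0 := by
  rw [volume_cube]
  exact pow_ne_zero _ (ENNReal.ofReal_pos.mpr hr).ne'

lemma vol_cube_ne_top {n : ℕ} (a : Fin n → ℝ) (r : ℝ) : volume (Cube n a r) ≠ ∞ := by
  rw [volume_cube]
  exact pow_ne_top ofReal_ne_top

lemma le_morrey {n : ℕ} (p : ℝ) (f : E n → ℝ≥0∞) {a : Fin n → ℝ} {r : ℝ} (hr : 0 < r) :
    volume (Cube n a r) ^ (1 / p - 1) * ∫⁻ x in Cube n a r, f x ≤ morreyNorm n p 1 f := by
  have h : volume (Cube n a r) ^ (1 / p - 1/1) * lqNorm 1 (Cube n a r) f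
      ≤ morreyNorm n p 1 f := by
    refine le_trans ?_ (le_iSup _ a)
    refine le_trans ?_ (le_iSup _ r)
    exact le_iSup (fun _ : 0 < r => _) hr
  simpa [lqNorm_one] using h

lemma setLIntegral_le_morrey {n : ℕ} (p : ℝ) (f : E n → ℝ≥0∞) {a : Fin n → ℝ} {r : ℝ}
    (hr : 0 < r) :
    ∫⁻ x in Cube n a r, f x ≤ morreyNorm n p 1 f * volume (Cube n a r) ^ (1 - 1/p) := by
  have h0 := vol_cube_pos hr a
  have ht := vol_cube_ne_top a r
  have key := le_morrey p f hr (a := a)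
  calc ∫⁻ x in Cube n a r, f x
      = volume (Cube n a r) ^ (1 - 1/p) *
        (volume (Cube n a r) ^ (1/p - 1) * ∫⁻ x in Cube n a r, f x) := by
        rw [← mul_assoc, ← ENNReal.rpow_add _ _ h0 ht]
        norm_num
    _ ≤ volume (Cube n a r) ^ (1 - 1/p) * morreyNorm n p 1 f :=
        mul_le_mul_right key _
    _ = morreyNorm n p 1 f * volume (Cube n a r) ^ (1 - 1/p) := mul_comm _ _

lemma setLIntegral_le_morrey_dyadic {n : ℕ} (p : ℝ) (f : E n → ℝ≥0∞) (L : ℤ)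
    (K : Fin n → ℤ) :
    ∫⁻ x in DyadicCube n L K, f x
      ≤ morreyNorm n p 1 f * volume (DyadicCube n L K) ^ (1 - 1/p) := by
  simp only [DyadicCube]
  exact setLIntegral_le_morrey p f (zpow_pos two_pos _)

lemma interval_overlap {b d c r x : ℝ} (hr : 0 < r) (hrd : r ≤ d)
    (h1 : b ≤ x) (h2 : x < b + d) (h3 : c ≤ x) (h4 : x < c + r) :
    r ≤ min (b + d) (c + 2*r) - max b (c - r) := by
  rcases le_total b (c - r) with hb | hb <;>
  rcases le_total (b + d) (c + 2*r) with hm | hm <;>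
  simp [max_eq_left, max_eq_right, min_eq_left, min_eq_right, hb, hm] <;> linarith

lemma interval_count {d c r x : ℝ} {K : ℤ} (hd : 0 < d) (hrd : r ≤ d)
    (h1 : K*d ≤ x) (h2 : x < K*d + d) (h3 : c ≤ x) (h4 : x < c + r) :
    K = ⌊c/d⌋ ∨ K = ⌊c/d⌋ + 1 := by
  have hK : ⌊x/d⌋ = K := by
    rw [Int.floor_eq_iff]
    constructor
    · rw [le_div_iff₀ hd]; linarith
    · rw [div_lt_iff₀ hd]; push_cast; linarith
  have h5 : ⌊c/d⌋ ≤ K := by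
    rw [← hK]; exact Int.floor_mono (by gcongr)
  have h6 : K ≤ ⌊c/d⌋ + 1 := by
    rw [← hK]
    have hx : x/d ≤ c/d + 1 := by
      rw [div_add' _ _ _ hd.ne']
      gcongr
      linarith
    calc ⌊x/d⌋ ≤ ⌊c/d + 1⌋ := Int.floor_mono hx
      _ = ⌊c/d⌋ + 1 := by rw [Int.floor_add_one]
  omega

lemma cube_inter_cube (n : ℕ) (a : Fin n → ℝ) (r : ℝ) (b : Fin n → ℝ) (d : ℝ) :
    Cube n a r ∩ Cube n b d
      = MDBox n (fun i => max (a i) (b i)) (fun i => min (a i + r) (b i + d)) := by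
  ext x
  simp only [Cube, MDBox, Set.mem_inter_iff, Set.mem_setOf_eq, max_le_iff, lt_min_iff,
    forall_and]
  tauto

lemma dyadic_subset_triple {n : ℕ} {lj : ℤ} {k : Fin n → ℤ} {a : Fin n → ℝ} {r : ℝ}
    (hd : (2:ℝ)^(-lj) ≤ r) {x : E n} (hx : x ∈ DyadicCube n lj k ∩ Cube n a r) :
    DyadicCube n lj k ⊆ Cube n (fun i => a i - r) (3*r) := by
  obtain ⟨hx1, hx2⟩ := hx
  intro y hy i
  have h1 := hx1 i
  have h2 := hx2 i
  have h3 := hy i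
  beta_reduce at h1 h2 h3 ⊢
  constructor
  · linarith [h1.1, h1.2, h2.1, h2.2, h3.1, h3.2]
  · linarith [h1.1, h1.2, h2.1, h2.2, h3.1, h3.2]

lemma volume_inter_triple_ge {n : ℕ} {lj : ℤ} {k : Fin n → ℤ} {a : Fin n → ℝ} {r : ℝ}
    (hr : 0 < r) (hd : r ≤ (2:ℝ)^(-lj)) {x : E n}
    (hx : x ∈ DyadicCube n lj k ∩ Cube n a r) :
    ENNReal.ofReal r ^ n ≤ volume (DyadicCube n lj k ∩ Cube n (fun i => a i - r) (3*r)) := by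
  obtain ⟨hx1, hx2⟩ := hx
  rw [DyadicCube, cube_inter_cube, volume_MDBox]
  calc ENNReal.ofReal r ^ n = ∏ _i : Fin n, ENNReal.ofReal r := by
        rw [Finset.prod_const, Finset.card_univ, Fintype.card_fin]
    _ ≤ _ := by
        refine Finset.prod_le_prod' fun i _ => ENNReal.ofReal_le_ofReal ?_
        have h1 := hx1 i
        have h2 := hx2 i
        beta_reduce at h1 h2 ⊢
        have e1 : a i - r + 3*r = a i + 2*r := by ring
        rw [e1]
        exact interval_overlap hr hd h1.1 h1.2 h2.1 h2.2

lemma sum_levels {β r : ℝ} (hβ : 0 < β) (hr : 0 < r) :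
    ∑' L : ℤ, (if r < (2:ℝ)^(-L) then ENNReal.ofReal ((2:ℝ) ^ ((L:ℝ) * β)) else 0)
      ≤ ENNReal.ofReal (r ^ (-β)) * (1 - ENNReal.ofReal ((2:ℝ)^(-β)))⁻¹ := by
  set L0 : ℤ := ⌊Real.logb 2 r⁻¹⌋ with hL0def
  have hL0 : (2:ℝ)^(L0:ℝ) ≤ r⁻¹ := by
    calc (2:ℝ)^(L0:ℝ) ≤ 2^(Real.logb 2 r⁻¹) :=
          Real.rpow_le_rpow_of_exponent_le one_le_two (Int.floor_le _)
      _ = r⁻¹ := Real.rpow_logb two_pos (by norm_num) (inv_pos.mpr hr)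
  set e : ℤ → ℝ≥0∞ := fun L =>
    if r < (2:ℝ)^(-L) then ENNReal.ofReal ((2:ℝ) ^ ((L:ℝ) * β)) else 0 with hedef
  have hcond : ∀ L : ℤ, r < (2:ℝ)^(-L) → L ≤ L0 := by
    intro L hL
    have h2L : (2:ℝ)^(L:ℝ) < r⁻¹ := by
      have h1 : (2:ℝ)^(-L) = ((2:ℝ)^(L:ℤ))⁻¹ := by
        rw [zpow_neg]
      rw [h1] at hL
      have h2 : (0:ℝ) < (2:ℝ)^(L:ℤ) := zpow_pos two_pos L
      have := (lt_inv_comm₀ hr h2).mp hL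
      rwa [Real.rpow_intCast]
    rw [hL0def]
    rw [Int.le_floor]
    exact le_of_lt ((Real.lt_logb_iff_rpow_lt one_lt_two (inv_pos.mpr hr)).mpr h2L)
  have hsupp : Function.support e ⊆ Set.Iic L0 := by
    intro L hL
    simp only [hedef, Function.mem_support, ne_eq, ite_eq_right_iff, not_forall] at hL
    exact hcond L hL.1
  rw [← tsum_subtype_eq_of_support_subset hsupp]
  set q : ℝ≥0∞ := ENNReal.ofReal ((2:ℝ)^(-β)) with hq
  set g : ℕ → ℝ≥0∞ := fun m => ENNReal.ofReal ((2:ℝ) ^ ((L0:ℝ) * β)) * q ^ m with hg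
  have hinj : Function.Injective (fun L : Set.Iic L0 => (L0 - (L:ℤ)).toNat) := by
    rintro ⟨L1, h1⟩ ⟨L2, h2⟩ h
    simp only [Set.mem_Iic] at h1 h2
    simp only at h
    apply Subtype.ext
    simp only
    omega
  have hle : ∀ L : Set.Iic L0, e L ≤ g ((L0 - (L:ℤ)).toNat) := by
    rintro ⟨L, hLm⟩
    simp only [Set.mem_Iic] at hLm
    by_cases hc : r < (2:ℝ)^(-L)
    · simp only [hedef, if_pos hc, hg]
      set m : ℕ := (L0 - L).toNat with hm
      have hmL : (m : ℝ) = (L0:ℝ) - (L:ℝ) := by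
        have h9 : ((L0 - L).toNat : ℤ) = L0 - L := Int.toNat_of_nonneg (by omega)
        have h10 := congrArg (fun z : ℤ => (z : ℝ)) h9
        push_cast at h10
        rw [hm]
        linarith
      have : ENNReal.ofReal ((2:ℝ) ^ ((L:ℝ) * β))
          = ENNReal.ofReal ((2:ℝ) ^ ((L0:ℝ) * β)) * q ^ m := by
        rw [hq, ← ENNReal.ofReal_pow (by positivity), ← ENNReal.ofReal_mul (by positivity)]
        congr 1
        rw [← Real.rpow_natCast ((2:ℝ) ^ (-β)) m, ← Real.rpow_mul (by norm_num),
          ← Real.rpow_add two_pos]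
        congr 1
        rw [hmL]
        ring
      rw [this]
    · simp only [hedef]
      rw [if_neg hc]
      exact zero_le
  calc ∑' (L : Set.Iic L0), e L ≤ ∑' m : ℕ, g m :=
        Summable.tsum_le_tsum_of_inj _ hinj (fun _ _ => zero_le) hle
          ENNReal.summable ENNReal.summable
    _ = ENNReal.ofReal ((2:ℝ) ^ ((L0:ℝ) * β)) * (1 - q)⁻¹ := by
        rw [hg, ENNReal.tsum_mul_left, ENNReal.tsum_geometric]
    _ ≤ ENNReal.ofReal (r ^ (-β)) * (1 - q)⁻¹ := by
        gcongr
        calc (2:ℝ) ^ ((L0:ℝ) * β) = ((2:ℝ) ^ (L0:ℝ)) ^ β := by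
              rw [← Real.rpow_mul (by norm_num)]
          _ ≤ (r⁻¹) ^ β := Real.rpow_le_rpow (by positivity) hL0 hβ.le
          _ = r ^ (-β) := by rw [← Real.rpow_neg_one r, ← Real.rpow_mul hr.le]; ring_nf

lemma ofReal_pow_rpow {x : ℝ} (hx : 0 < x) (n : ℕ) (θ : ℝ) :
    (ENNReal.ofReal x ^ n) ^ θ = ENNReal.ofReal (x ^ ((n:ℝ) * θ)) := by
  rw [← ENNReal.ofReal_pow hx.le, ENNReal.ofReal_rpow_of_pos (by positivity)]
  congr 1
  rw [← Real.rpow_natCast x n, ← Real.rpow_mul hx.le]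

lemma lint_ind {n : ℕ} {Dm : Set (E n)} (hD : MeasurableSet Dm) {S : Set (E n)}
    (cst : ℝ≥0∞) :
    ∫⁻ x in S, cst * Dm.indicator (fun _ => (1:ℝ≥0∞)) x = cst * volume (Dm ∩ S) := by
  rw [lintegral_const_mul _ (measurable_const.indicator hD)]
  congr 1
  rw [lintegral_indicator hD, setLIntegral_one, Measure.restrict_apply hD]

lemma lintegral_of_support {n : ℕ} {f : E n → ℝ≥0∞} {Dm : Set (E n)}
    (hD : MeasurableSet Dm) (h : ∀ x, x ∉ Dm → f x = 0) :
    ∫⁻ x, f x = ∫⁻ x in Dm, f x := by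
  rw [← lintegral_indicator hD]
  congr 1
  funext x
  by_cases hx : x ∈ Dm
  · simp [hx]
  · simp [hx, h x hx]

lemma rpow_helper1 {N vd : ℝ≥0∞} (h0 : vd ≠ 0) (ht : vd ≠ ∞) (σ : ℝ) :
    N * vd ^ (1 - σ) = N / vd ^ σ * vd := by
  rw [div_eq_mul_inv, ← ENNReal.rpow_neg, mul_assoc]
  congr 1
  rw [show (1 - σ) = -σ + 1 by ring, ENNReal.rpow_add _ _ h0 ht, ENNReal.rpow_one]

lemma rpow_collect {x : ℝ≥0∞} (h0 : x ≠ 0) (ht : x ≠ ∞) (u v w : ℝ) :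
    x^u * x^v * x^w = x^(u+v+w) := by
  rw [← ENNReal.rpow_add _ _ h0 ht, ← ENNReal.rpow_add _ _ h0 ht]

lemma tsum_const_bool (n : ℕ) (c : ℝ≥0∞) : ∑' _ : (Fin n → Bool), c = 2^n * c := by
  rw [tsum_fintype, Finset.sum_const, Finset.card_univ, nsmul_eq_mul]
  congr 1
  rw [Fintype.card_fun]
  push_cast
  simp

lemma morrey_zero_eq (p : ℝ) (f : E 0 → ℝ≥0∞) : morreyNorm 0 p 1 f = ∫⁻ x, f x := by
  have hcube : ∀ (c : Fin 0 → ℝ) (r : ℝ), Cube 0 c r = Set.univ := by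
    intro c r; ext x; exact ⟨fun _ => trivial, fun _ i => i.elim0⟩
  have hvol : ∀ (c : Fin 0 → ℝ) (r : ℝ), volume (Cube 0 c r) = 1 := by
    intro c r; rw [volume_cube]; simp
  apply le_antisymm
  · refine iSup_le fun c => iSup_le fun r => iSup_le fun hr => ?_
    rw [hvol, ENNReal.one_rpow, one_mul, lqNorm_one, hcube, Measure.restrict_univ]
  · have h := le_morrey (n := 0) p f (a := fun _ => 0) (r := 1) one_pos
    rwa [hvol, ENNReal.one_rpow, one_mul, hcube, Measure.restrict_univ] at h

/-- atomic decomposition estimate for Morrey spaces, endpoint `q = t = 1`. -/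
theorem morrey_decomposition_one (n : ℕ) (p s : ℝ)
    (hp : 1 ≤ p) (hs : 1 ≤ s) (hps : p < s) :
    ∃ C : ℝ≥0∞, 0 < C ∧ C ≠ ∞ ∧
      ∀ (l : ℕ → ℤ) (k : ℕ → Fin n → ℤ) (a : ℕ → E n → ℝ≥0∞) (lam : ℕ → ℝ≥0∞),
        (∀ j, Measurable (a j)) →
        (∀ j x, x ∉ DyadicCube n (l j) (k j) → a j x = 0) →
        (∀ j, morreyNorm n s 1 (a j) ≠ ∞) →
        morreyNorm n p 1
          (fun x => ∑' j, lam j *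
            (DyadicCube n (l j) (k j)).indicator (fun _ => (1 : ℝ≥0∞)) x) ≠ ∞ →
        morreyNorm n p 1 (fun x => ∑' j, lam j * a j x) ≤
          C * morreyNorm n p 1 (fun x =>
            ∑' j, lam j *
              (morreyNorm n s 1 (a j) / volume (DyadicCube n (l j) (k j)) ^ (1 / s)) *
              (DyadicCube n (l j) (k j)).indicator (fun _ => (1 : ℝ≥0∞)) x) := by
  classical
  have hp0 : 0 < p := lt_of_lt_of_le one_pos hp
  have hs0 : 0 < s := lt_of_lt_of_le one_pos hs
  have h1p : 0 ≤ 1 - 1/p := by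
    have h2 : 1/p ≤ 1 := by rw [div_le_one hp0]; exact hp
    linarith
  rcases Nat.eq_zero_or_pos n with hn | hn
  · -- the degenerate case n = 0
    subst hn
    refine ⟨1, one_pos, one_ne_top, ?_⟩
    intro l k a lam ha hsupp hNfin hGfin
    rw [one_mul, morrey_zero_eq, morrey_zero_eq]
    have hmeasg : ∀ j, Measurable fun x => lam j *
        (morreyNorm 0 s 1 (a j) / volume (DyadicCube 0 (l j) (k j)) ^ (1 / s)) *
        (DyadicCube 0 (l j) (k j)).indicator (fun _ => (1:ℝ≥0∞)) x :=
      fun j => (measurable_const.indicator (measurableSet_dyadic _ _ _)).const_mul _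
    rw [lintegral_tsum fun j => ((ha j).const_mul (lam j)).aemeasurable,
      lintegral_tsum fun j => (hmeasg j).aemeasurable]
    refine ENNReal.tsum_le_tsum fun j => ?_
    have hvol1 : volume (DyadicCube 0 (l j) (k j)) = 1 := by
      rw [volume_dyadic]; simp
    have hrhs : ∫⁻ x, lam j *
        (morreyNorm 0 s 1 (a j) / volume (DyadicCube 0 (l j) (k j)) ^ (1 / s)) *
        (DyadicCube 0 (l j) (k j)).indicator (fun _ => (1:ℝ≥0∞)) x
        = lam j * morreyNorm 0 s 1 (a j) := by
      rw [← setLIntegral_univ, lint_ind (measurableSet_dyadic _ _ _), Set.inter_univ,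
        hvol1, mul_one, ENNReal.one_rpow, div_one]
    rw [hrhs, lintegral_const_mul _ (ha j)]
    refine mul_le_mul_right ?_ _
    calc ∫⁻ x, a j x = ∫⁻ x in DyadicCube 0 (l j) (k j), a j x :=
          lintegral_of_support (measurableSet_dyadic _ _ _) (hsupp j)
      _ ≤ morreyNorm 0 s 1 (a j) * volume (DyadicCube 0 (l j) (k j)) ^ (1 - 1/s) :=
          setLIntegral_le_morrey_dyadic s (a j) (l j) (k j)
      _ = morreyNorm 0 s 1 (a j) := by rw [hvol1, ENNReal.one_rpow, mul_one]
  -- the main case n ≥ 1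
  have hps' : 1/s < 1/p := one_div_lt_one_div_of_lt hp0 hps
  set β : ℝ := (n:ℝ) * (1/p - 1/s) with hβdef
  have hβ : 0 < β := by
    have hn' : (0:ℝ) < n := by exact_mod_cast hn
    have h2 : 0 < 1/p - 1/s := by linarith
    positivity
  set q0 : ℝ≥0∞ := ENNReal.ofReal ((2:ℝ)^(-β)) with hq0
  have hq1 : q0 < 1 := by
    rw [hq0]
    refine lt_of_lt_of_le (ENNReal.ofReal_lt_ofReal_iff one_pos |>.mpr ?_) (by simp)
    exact Real.rpow_lt_one_of_one_lt_of_neg one_lt_two (by linarith)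
  have hq1' : (1:ℝ≥0∞) - q0 ≠ 0 := by
    rw [ne_eq, tsub_eq_zero_iff_le]
    exact not_le.mpr hq1
  set C : ℝ≥0∞ := 3^n + 2^n * (1 - q0)⁻¹ with hC
  have h3pos : (0:ℝ≥0∞) < 3^n := pos_iff_ne_zero.mpr (pow_ne_zero _ (by norm_num))
  have hC0 : C ≠ 0 := (lt_of_lt_of_le h3pos le_self_add).ne'
  have hCt : C ≠ ∞ := by
    rw [hC]
    refine ENNReal.add_ne_top.mpr ⟨?_, ?_⟩
    · exact pow_ne_top (by norm_num)
    · exact ENNReal.mul_ne_top (pow_ne_top (by norm_num)) (ENNReal.inv_ne_top.mpr hq1')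
  refine ⟨C, pos_iff_ne_zero.mpr hC0, hCt, ?_⟩
  intro l k a lam ha hsupp hNfin hGfin
  -- general facts about dyadic volumes
  have hvol0 : ∀ (L : ℤ) (K : Fin n → ℤ), volume (DyadicCube n L K) ≠ 0 := fun L K => by
    rw [volume_dyadic]
    exact pow_ne_zero _ (ENNReal.ofReal_pos.mpr (zpow_pos two_pos _)).ne'
  have hvolt : ∀ (L : ℤ) (K : Fin n → ℤ), volume (DyadicCube n L K) ≠ ∞ := fun L K => by
    rw [volume_dyadic]
    exact pow_ne_top ofReal_ne_top
  have hvols0 : ∀ (L : ℤ) (K : Fin n → ℤ), volume (DyadicCube n L K) ^ (1/s) ≠ 0 :=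
    fun L K => by
      simp [ENNReal.rpow_eq_zero_iff, hvol0 L K, hvolt L K]
  have hvolst : ∀ (L : ℤ) (K : Fin n → ℤ), volume (DyadicCube n L K) ^ (1/s) ≠ ∞ :=
    fun L K => by
      simp [ENNReal.rpow_eq_top_iff, hvol0 L K, hvolt L K]
  set gfun : E n → ℝ≥0∞ := fun x => ∑' j, lam j *
      (morreyNorm n s 1 (a j) / volume (DyadicCube n (l j) (k j)) ^ (1 / s)) *
      (DyadicCube n (l j) (k j)).indicator (fun _ => (1 : ℝ≥0∞)) x with hgfun
  set M : ℝ≥0∞ := morreyNorm n p 1 gfun with hMdef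
  have hmeasg : ∀ j, Measurable fun x => lam j *
      (morreyNorm n s 1 (a j) / volume (DyadicCube n (l j) (k j)) ^ (1 / s)) *
      (DyadicCube n (l j) (k j)).indicator (fun _ => (1:ℝ≥0∞)) x :=
    fun j => (measurable_const.indicator (measurableSet_dyadic _ _ _)).const_mul _
  by_cases hMt : M = ∞
  · rw [hMt, ENNReal.mul_top hC0]; exact le_top
  refine iSup_le fun c => iSup_le fun r => iSup_le fun hr => ?_
  rw [lqNorm_one]
  set V : ℝ≥0∞ := volume (Cube n c r) with hV
  have hV0 : V ≠ 0 := vol_cube_pos hr c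
  have hVt : V ≠ ∞ := vol_cube_ne_top c r
  have hVr : V = ENNReal.ofReal r ^ n := by rw [hV, volume_cube]
  have key : ∫⁻ x in Cube n c r, (∑' j, lam j * a j x) ≤ C * M * V ^ (1 - 1/p) := by
    rw [lintegral_tsum fun j => ((ha j).const_mul (lam j)).aemeasurable]
    set Q3 : Set (E n) := Cube n (fun i => c i - r) (3*r) with hQ3
    have hr3 : 0 < 3*r := by linarith
    set Sm : ℕ → ℝ≥0∞ := fun j => if (2:ℝ)^(-(l j)) ≤ r then
        ∫⁻ x in Q3, lam j *
          (morreyNorm n s 1 (a j) / volume (DyadicCube n (l j) (k j)) ^ (1 / s)) *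
          (DyadicCube n (l j) (k j)).indicator (fun _ => (1:ℝ≥0∞)) x else 0 with hSm
    set Bg : ℕ → ℝ≥0∞ := fun j =>
        if r < (2:ℝ)^(-(l j)) ∧ (DyadicCube n (l j) (k j) ∩ Cube n c r).Nonempty then
          lam j * (morreyNorm n s 1 (a j) / volume (DyadicCube n (l j) (k j)) ^ (1/s)) *
            (volume (DyadicCube n (l j) (k j)) ^ (1/s) * V ^ (1 - 1/s))
        else 0 with hBg
    have hperj : ∀ j, lam j * ∫⁻ x in Cube n c r, a j x ≤ Sm j + Bg j := by
      intro j
      by_cases hint : (DyadicCube n (l j) (k j) ∩ Cube n c r).Nonempty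
      · rcases le_or_gt ((2:ℝ)^(-(l j))) r with hsm | hbg2
        · -- small cube
          refine le_trans ?_ le_self_add
          simp only [hSm, if_pos hsm]
          obtain ⟨x0, hx0⟩ := hint
          have hsub : DyadicCube n (l j) (k j) ⊆ Q3 := by
            rw [hQ3]; exact dyadic_subset_triple hsm hx0
          have h0 := hvol0 (l j) (k j)
          have ht := hvolt (l j) (k j)
          calc lam j * ∫⁻ x in Cube n c r, a j x
              ≤ lam j * (morreyNorm n s 1 (a j) *
                  volume (DyadicCube n (l j) (k j)) ^ (1 - 1/s)) := by
                refine mul_le_mul_right ?_ _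
                calc ∫⁻ x in Cube n c r, a j x ≤ ∫⁻ x, a j x :=
                      setLIntegral_le_lintegral _ _
                  _ = ∫⁻ x in DyadicCube n (l j) (k j), a j x :=
                      lintegral_of_support (measurableSet_dyadic _ _ _) (hsupp j)
                  _ ≤ _ := setLIntegral_le_morrey_dyadic s (a j) (l j) (k j)
            _ = lam j * (morreyNorm n s 1 (a j) /
                  volume (DyadicCube n (l j) (k j)) ^ (1/s)) *
                  volume (DyadicCube n (l j) (k j)) := by
                rw [rpow_helper1 h0 ht]; ring
            _ = ∫⁻ x in Q3, lam j *
                  (morreyNorm n s 1 (a j) / volume (DyadicCube n (l j) (k j)) ^ (1 / s)) *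
                  (DyadicCube n (l j) (k j)).indicator (fun _ => (1:ℝ≥0∞)) x := by
                rw [lint_ind (measurableSet_dyadic _ _ _),
                  Set.inter_eq_left.mpr hsub]
        · -- big cube
          refine le_trans ?_ le_add_self
          simp only [hBg, if_pos (And.intro hbg2 hint)]
          have hNc : morreyNorm n s 1 (a j)
              = morreyNorm n s 1 (a j) / volume (DyadicCube n (l j) (k j)) ^ (1/s) *
                volume (DyadicCube n (l j) (k j)) ^ (1/s) :=
            (ENNReal.div_mul_cancel (hvols0 _ _) (hvolst _ _)).symm
          calc lam j * ∫⁻ x in Cube n c r, a j x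
              ≤ lam j * (morreyNorm n s 1 (a j) * V ^ (1 - 1/s)) := by
                refine mul_le_mul_right ?_ _
                rw [hV]
                exact setLIntegral_le_morrey s (a j) hr
            _ = _ := by
                conv_lhs => rw [hNc]
                simp only [mul_assoc]
      · have hzero : ∫⁻ x in Cube n c r, a j x = 0 := by
          have h0 : ∀ x ∈ Cube n c r, a j x = 0 := fun x hx =>
            hsupp j x (fun hmem => hint ⟨x, hmem, hx⟩)
          calc ∫⁻ x in Cube n c r, a j x = ∫⁻ _x in Cube n c r, 0 :=
                setLIntegral_congr_fun (measurableSet_cube _ _ _) h0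
            _ = 0 := by simp
        rw [hzero, mul_zero]
        exact zero_le
    -- the small part
    have hsmall : ∑' j, Sm j ≤ 3^n * (M * V ^ (1 - 1/p)) := by
      have hterm : ∀ j, Sm j ≤ ∫⁻ x in Q3, lam j *
          (morreyNorm n s 1 (a j) / volume (DyadicCube n (l j) (k j)) ^ (1 / s)) *
          (DyadicCube n (l j) (k j)).indicator (fun _ => (1:ℝ≥0∞)) x := by
        intro j
        simp only [hSm]
        split_ifs with hc
        · exact le_rfl
        · exact zero_le
      have hv3 : volume Q3 = ENNReal.ofReal (3*r) ^ n := by rw [hQ3, volume_cube]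
      have h31 : (1:ℝ≥0∞) ≤ 3^n := by
        calc (1:ℝ≥0∞) = 1^n := (one_pow n).symm
          _ ≤ 3^n := pow_le_pow_left₀ zero_le (by norm_num) n
      calc ∑' j, Sm j
          ≤ ∑' j, ∫⁻ x in Q3, lam j *
            (morreyNorm n s 1 (a j) / volume (DyadicCube n (l j) (k j)) ^ (1 / s)) *
            (DyadicCube n (l j) (k j)).indicator (fun _ => (1:ℝ≥0∞)) x :=
            ENNReal.tsum_le_tsum hterm
        _ = ∫⁻ x in Q3, gfun x :=
            (lintegral_tsum fun j => (hmeasg j).aemeasurable).symm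
        _ ≤ M * volume Q3 ^ (1 - 1/p) := by
            rw [hQ3, hMdef]
            exact setLIntegral_le_morrey p gfun hr3
        _ = M * ((3:ℝ≥0∞)^n * ENNReal.ofReal r ^ n) ^ (1 - 1/p) := by
            rw [hv3, ENNReal.ofReal_mul (by norm_num : (0:ℝ) ≤ 3), mul_pow]
            norm_num
        _ = M * (((3:ℝ≥0∞)^n) ^ (1 - 1/p) * (ENNReal.ofReal r ^ n) ^ (1 - 1/p)) := by
            rw [ENNReal.mul_rpow_of_nonneg _ _ h1p]
        _ ≤ M * (3^n * V ^ (1 - 1/p)) := by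
            rw [hVr]
            refine mul_le_mul_right (mul_le_mul_left ?_ _) _
            calc ((3:ℝ≥0∞)^n) ^ (1 - 1/p) ≤ ((3:ℝ≥0∞)^n) ^ (1:ℝ) :=
                  ENNReal.rpow_le_rpow_of_exponent_le h31
                    (by have := one_div_pos.mpr hp0; linarith)
              _ = 3^n := ENNReal.rpow_one _
        _ = 3^n * (M * V ^ (1 - 1/p)) := by ring
    -- the big part
    have hbig : ∑' j, Bg j ≤ 2^n * (1 - q0)⁻¹ * (M * V ^ (1 - 1/p)) := by
      rw [← ENNReal.tsum_fiberwise Bg (fun j => ((l j, k j) : ℤ × (Fin n → ℤ)))]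
      set F : ℤ × (Fin n → ℤ) → ℝ≥0∞ := fun pr =>
        if r < (2:ℝ)^(-pr.1) ∧ (DyadicCube n pr.1 pr.2 ∩ Cube n c r).Nonempty then
          M * V ^ (1 - 1/s) * (volume (DyadicCube n pr.1 pr.2)) ^ (1/s - 1/p)
        else 0 with hF
      have hFb : ∀ pr : ℤ × (Fin n → ℤ),
          (∑' b : (fun j => ((l j, k j) : ℤ × (Fin n → ℤ))) ⁻¹' {pr}, Bg b) ≤ F pr := by
        rintro ⟨L, K⟩
        have hfib : ∀ b : (fun j => ((l j, k j) : ℤ × (Fin n → ℤ))) ⁻¹' {(L, K)},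
            l (b : ℕ) = L ∧ k (b : ℕ) = K := by
          rintro ⟨j, hj⟩
          have := Set.mem_singleton_iff.mp (Set.mem_preimage.mp hj)
          exact Prod.mk.injEq .. ▸ Prod.ext_iff.mp this
        by_cases hcond : r < (2:ℝ)^(-L) ∧ (DyadicCube n L K ∩ Cube n c r).Nonempty
        · simp only [hF, if_pos hcond]
          have hvd0' := hvol0 L K
          have hvdt' := hvolt L K
          -- rewrite each term of the fiber sum
          have hterm : ∀ b : (fun j => ((l j, k j) : ℤ × (Fin n → ℤ))) ⁻¹' {(L, K)},
              Bg (b : ℕ) = (lam (b : ℕ) * (morreyNorm n s 1 (a (b : ℕ)) /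
                  volume (DyadicCube n L K) ^ (1/s))) *
                (volume (DyadicCube n L K) ^ (1/s) * V ^ (1 - 1/s)) := by
            intro b
            obtain ⟨h1, h2⟩ := hfib b
            simp only [hBg, h1, h2, if_pos hcond]
          have hSb : (∑' b : (fun j => ((l j, k j) : ℤ × (Fin n → ℤ))) ⁻¹' {(L, K)},
              lam (b : ℕ) * (morreyNorm n s 1 (a (b : ℕ)) /
                volume (DyadicCube n L K) ^ (1/s))) * volume (DyadicCube n L K)
              ≤ M * volume (DyadicCube n L K) ^ (1 - 1/p) := by
            rw [← ENNReal.tsum_mul_right]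
            have hterm2 : ∀ b : (fun j => ((l j, k j) : ℤ × (Fin n → ℤ))) ⁻¹' {(L, K)},
                lam (b : ℕ) * (morreyNorm n s 1 (a (b : ℕ)) /
                  volume (DyadicCube n L K) ^ (1/s)) * volume (DyadicCube n L K)
                = ∫⁻ x in DyadicCube n L K, lam (b : ℕ) *
                  (morreyNorm n s 1 (a (b : ℕ)) /
                    volume (DyadicCube n (l (b : ℕ)) (k (b : ℕ))) ^ (1 / s)) *
                  (DyadicCube n (l (b : ℕ)) (k (b : ℕ))).indicator
                    (fun _ => (1:ℝ≥0∞)) x := by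
              intro b
              obtain ⟨h1, h2⟩ := hfib b
              rw [lint_ind (measurableSet_dyadic _ _ _), h1, h2, Set.inter_self]
            calc (∑' b : (fun j => ((l j, k j) : ℤ × (Fin n → ℤ))) ⁻¹' {(L, K)},
                lam (b : ℕ) * (morreyNorm n s 1 (a (b : ℕ)) /
                  volume (DyadicCube n L K) ^ (1/s)) * volume (DyadicCube n L K))
                = ∑' b : (fun j => ((l j, k j) : ℤ × (Fin n → ℤ))) ⁻¹' {(L, K)},
                  ∫⁻ x in DyadicCube n L K, lam (b : ℕ) *
                    (morreyNorm n s 1 (a (b : ℕ)) /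
                      volume (DyadicCube n (l (b : ℕ)) (k (b : ℕ))) ^ (1 / s)) *
                    (DyadicCube n (l (b : ℕ)) (k (b : ℕ))).indicator
                      (fun _ => (1:ℝ≥0∞)) x := tsum_congr hterm2
              _ ≤ ∑' j : ℕ, ∫⁻ x in DyadicCube n L K, lam j *
                    (morreyNorm n s 1 (a j) /
                      volume (DyadicCube n (l j) (k j)) ^ (1 / s)) *
                    (DyadicCube n (l j) (k j)).indicator (fun _ => (1:ℝ≥0∞)) x :=
                  Summable.tsum_le_tsum_of_inj Subtype.val Subtype.val_injective
                    (fun _ _ => zero_le) (fun b => le_rfl)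
                    ENNReal.summable ENNReal.summable
              _ = ∫⁻ x in DyadicCube n L K, gfun x :=
                  (lintegral_tsum fun j => (hmeasg j).aemeasurable).symm
              _ ≤ M * volume (DyadicCube n L K) ^ (1 - 1/p) := by
                  rw [hMdef]
                  exact setLIntegral_le_morrey_dyadic p gfun L K
          calc (∑' b : (fun j => ((l j, k j) : ℤ × (Fin n → ℤ))) ⁻¹' {(L, K)}, Bg (b:ℕ))
              = (∑' b : (fun j => ((l j, k j) : ℤ × (Fin n → ℤ))) ⁻¹' {(L, K)},
                  lam (b : ℕ) * (morreyNorm n s 1 (a (b : ℕ)) /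
                    volume (DyadicCube n L K) ^ (1/s))) *
                (volume (DyadicCube n L K) ^ (1/s) * V ^ (1 - 1/s)) := by
                rw [← ENNReal.tsum_mul_right]
                exact tsum_congr hterm
            _ ≤ (M * volume (DyadicCube n L K) ^ (1 - 1/p) / volume (DyadicCube n L K)) *
                  (volume (DyadicCube n L K) ^ (1/s) * V ^ (1 - 1/s)) := by
                refine mul_le_mul_left ?_ _
                exact (ENNReal.le_div_iff_mul_le (Or.inl hvd0') (Or.inl hvdt')).mpr hSb
            _ = M * V ^ (1 - 1/s) * volume (DyadicCube n L K) ^ (1/s - 1/p) := by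
                rw [div_eq_mul_inv, ← ENNReal.rpow_neg_one (volume (DyadicCube n L K))]
                rw [show M * volume (DyadicCube n L K) ^ (1 - 1/p) *
                    volume (DyadicCube n L K) ^ (-1:ℝ) *
                    (volume (DyadicCube n L K) ^ (1/s) * V ^ (1 - 1/s))
                  = M * V ^ (1 - 1/s) * (volume (DyadicCube n L K) ^ (1 - 1/p) *
                    volume (DyadicCube n L K) ^ (-1:ℝ) *
                    volume (DyadicCube n L K) ^ (1/s)) by ring]
                rw [rpow_collect hvd0' hvdt']
                congr 2
                ring
        · simp only [hF, if_neg hcond]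
          refine le_of_eq (ENNReal.tsum_eq_zero.mpr ?_)
          intro b
          obtain ⟨h1, h2⟩ := hfib b
          simp only [hBg, h1, h2, if_neg hcond]
      refine le_trans (ENNReal.tsum_le_tsum hFb) ?_
      rw [ENNReal.tsum_prod']
      -- sum in K for fixed L
      have hwL : ∀ L : ℤ, (volume (DyadicCube n L (fun _ => 0))) ^ ((1:ℝ)/s - 1/p)
          = ENNReal.ofReal ((2:ℝ) ^ ((L:ℝ) * β)) := by
        intro L
        rw [volume_dyadic, ofReal_pow_rpow (zpow_pos two_pos _)]
        congr 1
        rw [← Real.rpow_intCast 2 (-L), ← Real.rpow_mul (by norm_num : (0:ℝ) ≤ 2)]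
        congr 1
        push_cast
        rw [hβdef]
        ring
      have hvolK : ∀ (L : ℤ) (K : Fin n → ℤ),
          volume (DyadicCube n L K) = volume (DyadicCube n L (fun _ => 0)) := by
        intro L K
        rw [volume_dyadic, volume_dyadic]
      have hKsum : ∀ L : ℤ, (∑' K : Fin n → ℤ, F (L, K))
          ≤ 2^n * (M * V ^ (1 - 1/s)) *
            (if r < (2:ℝ)^(-L) then ENNReal.ofReal ((2:ℝ) ^ ((L:ℝ) * β)) else 0) := by
        intro L
        by_cases hrL : r < (2:ℝ)^(-L)
        · rw [if_pos hrL]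
          set cst : ℝ≥0∞ := M * V ^ (1 - 1/s) *
            (volume (DyadicCube n L (fun _ => 0))) ^ ((1:ℝ)/s - 1/p) with hcst
          have hsup2 : Function.support (fun K : Fin n → ℤ => F (L, K))
              ⊆ {K : Fin n → ℤ | ∀ i, K i = ⌊c i / (2:ℝ)^(-L)⌋ ∨
                  K i = ⌊c i / (2:ℝ)^(-L)⌋ + 1} := by
            intro K hK
            have hcond : r < (2:ℝ)^(-L) ∧ (DyadicCube n L K ∩ Cube n c r).Nonempty := by
              by_contra hcond
              exact hK (by simp only [hF, if_neg hcond])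
            obtain ⟨x, hx1, hx2⟩ := hcond.2
            intro i
            have h1 := hx1 i
            have h2 := hx2 i
            beta_reduce at h1 h2
            exact interval_count (zpow_pos two_pos _) hrL.le h1.1 h1.2 h2.1 h2.2
          rw [← tsum_subtype_eq_of_support_subset hsup2]
          have hFle : ∀ K' : {K : Fin n → ℤ | ∀ i, K i = ⌊c i / (2:ℝ)^(-L)⌋ ∨
              K i = ⌊c i / (2:ℝ)^(-L)⌋ + 1},
              F (L, (K' : Fin n → ℤ)) ≤ cst := by
            intro K'
            simp only [hF, hcst]
            split_ifs with hc
            · rw [hvolK L (K' : Fin n → ℤ)]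
            · exact zero_le
          have hinj2 : Function.Injective
              (fun K' : {K : Fin n → ℤ | ∀ i, K i = ⌊c i / (2:ℝ)^(-L)⌋ ∨
                  K i = ⌊c i / (2:ℝ)^(-L)⌋ + 1} =>
                fun i => decide ((K' : Fin n → ℤ) i = ⌊c i / (2:ℝ)^(-L)⌋)) := by
            rintro ⟨K1, hK1⟩ ⟨K2, hK2⟩ h
            apply Subtype.ext
            funext i
            have hb := congrFun h i
            simp only [decide_eq_decide] at hb
            have p1 := hK1 i
            have p2 := hK2 i
            simp only at p1 p2 ⊢
            omega
          calc (∑' K' : {K : Fin n → ℤ | ∀ i, K i = ⌊c i / (2:ℝ)^(-L)⌋ ∨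
                K i = ⌊c i / (2:ℝ)^(-L)⌋ + 1}, F (L, (K' : Fin n → ℤ)))
              ≤ ∑' _b : Fin n → Bool, cst :=
                Summable.tsum_le_tsum_of_inj _ hinj2 (fun _ _ => zero_le) hFle
                  ENNReal.summable ENNReal.summable
            _ = 2^n * cst := tsum_const_bool n cst
            _ = 2^n * (M * V ^ (1 - 1/s)) * ENNReal.ofReal ((2:ℝ) ^ ((L:ℝ) * β)) := by
                rw [hcst, hwL L]; ring
        · rw [if_neg hrL, mul_zero]
          refine le_of_eq (ENNReal.tsum_eq_zero.mpr fun K => ?_)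
          simp only [hF]
          exact if_neg (fun hc => hrL hc.1)
      calc (∑' (L : ℤ) (K : Fin n → ℤ), F (L, K))
          ≤ ∑' L : ℤ, 2^n * (M * V ^ (1 - 1/s)) *
            (if r < (2:ℝ)^(-L) then ENNReal.ofReal ((2:ℝ) ^ ((L:ℝ) * β)) else 0) :=
            ENNReal.tsum_le_tsum hKsum
        _ = 2^n * (M * V ^ (1 - 1/s)) *
            ∑' L : ℤ, (if r < (2:ℝ)^(-L) then ENNReal.ofReal ((2:ℝ) ^ ((L:ℝ) * β)) else 0) :=
            ENNReal.tsum_mul_left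
        _ ≤ 2^n * (M * V ^ (1 - 1/s)) *
            (ENNReal.ofReal (r ^ (-β)) * (1 - q0)⁻¹) :=
            mul_le_mul_right (sum_levels hβ hr) _
        _ = 2^n * (1 - q0)⁻¹ * (M * (V ^ (1 - 1/s) * ENNReal.ofReal (r ^ (-β)))) := by
            ring
        _ = 2^n * (1 - q0)⁻¹ * (M * V ^ (1 - 1/p)) := by
            congr 2
            rw [hVr, ofReal_pow_rpow hr n (1 - 1/s), ofReal_pow_rpow hr n (1 - 1/p),
              ← ENNReal.ofReal_mul (by positivity), ← Real.rpow_add hr]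
            congr 1
            rw [hβdef]
            ring
    calc ∑' j, ∫⁻ x in Cube n c r, lam j * a j x
        = ∑' j, lam j * ∫⁻ x in Cube n c r, a j x := by
          refine tsum_congr fun j => ?_
          exact lintegral_const_mul _ (ha j)
      _ ≤ ∑' j, (Sm j + Bg j) := ENNReal.tsum_le_tsum hperj
      _ = ∑' j, Sm j + ∑' j, Bg j := ENNReal.tsum_add
      _ ≤ 3^n * (M * V ^ (1 - 1/p)) + 2^n * (1 - q0)⁻¹ * (M * V ^ (1 - 1/p)) :=
          add_le_add hsmall hbig
      _ = C * M * V ^ (1 - 1/p) := by rw [hC]; ring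
  calc V ^ (1/p - 1/1) * ∫⁻ x in Cube n c r, (∑' j, lam j * a j x)
      ≤ V ^ (1/p - 1/1) * (C * M * V ^ (1 - 1/p)) := mul_le_mul_right key _
    _ = C * M * (V ^ (1/p - 1/1) * V ^ (1 - 1/p)) := by ring
    _ = C * M := by
        rw [← ENNReal.rpow_add _ _ hV0 hVt, show 1/p - 1/1 + (1 - 1/p) = 0 by ring,
          ENNReal.rpow_zero, mul_one]
end
end

section
/- Let 1 ≤ v < ∞, l ∈ ℤ, and let Q be a dyadic cube of side 2^{-l}. For nonnegative measurable f₁, f₂: ‖ ∫_{B(0,2^{-l})} f₁(·+y) f₂(·−y) dy ‖_{L^v(Q)} ≲ |B(0,2^{-l})|^{1 + 1/v} · inf_{y₁ ∈ Q} M^{(v)}f₁(y₁) · inf_{y₂ ∈ Q} M^{(v)}f₂(y₂), where M^{(v)}f(x) = sup_{R>0} (|B(x,R)|^{-1} ∫_{B(x,R)} |f|^v)^{1/v} is the powered Hardy–Littlewood maximal operator. -/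
open MeasureTheory Metric ENNReal

noncomputable section

/-! ### Auxiliary lemmas -/

/-- Hölder's inequality with the constant function `1`. -/
lemma aux_holder_one {α : Type*} [MeasurableSpace α] (μ : Measure α) {v : ℝ} (hv : 1 ≤ v)
    {g : α → ℝ≥0∞} (hg : AEMeasurable g μ) :
    ∫⁻ a, g a ∂μ ≤ (∫⁻ a, g a ^ v ∂μ) ^ (1 / v) * (μ Set.univ) ^ (1 - 1 / v) := by
  rcases eq_or_lt_of_le hv with h1 | h1
  · rw [← h1]
    norm_num [ENNReal.rpow_one]
  · have hpq := Real.HolderConjugate.conjExponent h1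
    have h := ENNReal.lintegral_mul_le_Lp_mul_Lq μ hpq hg
      (aemeasurable_const (b := (1 : ℝ≥0∞)))
    simp only [Pi.mul_apply, mul_one, ENNReal.one_rpow, lintegral_one] at h
    have hq : 1 / Real.conjExponent v = 1 - 1 / v := by
      have := hpq.inv_add_inv_eq_inv
      rw [inv_one] at this
      rw [one_div, one_div]
      linarith
    rwa [hq] at h

/-- Bound a ball integral of `f^v` by the powered maximal function. -/
lemma aux_le_powMax (n : ℕ) {v : ℝ} (hv0 : 0 < v) (f : E n → ℝ≥0∞) (q : E n) {ρ : ℝ}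
    (hρ : 0 < ρ) :
    ∫⁻ w in ball q ρ, f w ^ v ≤ volume (ball q ρ) * powMax n v f q ^ v := by
  have hvol0 : volume (ball q ρ) ≠ 0 := (measure_ball_pos volume q hρ).ne'
  have hvolt : volume (ball q ρ) ≠ ∞ := measure_ball_lt_top.ne
  have h1 : ((volume (ball q ρ))⁻¹ * ∫⁻ w in ball q ρ, f w ^ v) ^ (1 / v)
      ≤ powMax n v f q := by
    exact le_iSup₂ (f := fun (R : ℝ) (_ : 0 < R) =>
      ((volume (ball q R))⁻¹ * ∫⁻ y in ball q R, f y ^ v) ^ (1 / v)) ρ hρ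
  have h2 : (volume (ball q ρ))⁻¹ * ∫⁻ w in ball q ρ, f w ^ v ≤ powMax n v f q ^ v := by
    have h3 := ENNReal.rpow_le_rpow h1 hv0.le
    rwa [← ENNReal.rpow_mul, one_div, inv_mul_cancel₀ hv0.ne', ENNReal.rpow_one] at h3
  calc ∫⁻ w in ball q ρ, f w ^ v
      = volume (ball q ρ) * ((volume (ball q ρ))⁻¹ * ∫⁻ w in ball q ρ, f w ^ v) := by
        rw [← mul_assoc, ENNReal.mul_inv_cancel hvol0 hvolt, one_mul]
    _ ≤ volume (ball q ρ) * powMax n v f q ^ v := mul_le_mul_right h2 _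

/-- The ENNReal algebra needed at the end of the main estimate. -/
lemma aux_alg {v : ℝ} (hv : 1 ≤ v) (x a b m₁ m₂ : ℝ≥0∞) (hx0 : x ≠ 0) (hxt : x ≠ ∞) :
    (x ^ (v - 1) * (a * x * m₁ ^ v * (b * x * m₂ ^ v))) ^ (1 / v)
      = (a * b) ^ (1 / v) * x ^ (1 + 1 / v) * m₁ * m₂ := by
  have hv0 : v ≠ 0 := by positivity
  have h1v : (0:ℝ) ≤ 1 / v := by positivity
  have hxpow : x ^ (v - 1) * x * x = x ^ (v + 1) := by
    rw [show v + 1 = v - 1 + 1 + 1 by ring, ENNReal.rpow_add _ _ hx0 hxt,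
      ENNReal.rpow_add _ _ hx0 hxt, ENNReal.rpow_one]
  have hinner : x ^ (v - 1) * (a * x * m₁ ^ v * (b * x * m₂ ^ v))
      = a * b * x ^ (v + 1) * (m₁ * m₂) ^ v := by
    rw [ENNReal.mul_rpow_of_nonneg m₁ m₂ (by positivity : (0:ℝ) ≤ v), ← hxpow]
    ring
  rw [hinner, ENNReal.mul_rpow_of_nonneg _ _ h1v, ENNReal.mul_rpow_of_nonneg _ _ h1v,
    ← ENNReal.rpow_mul, ← ENNReal.rpow_mul,
    show (v + 1) * (1 / v) = 1 + 1 / v by rw [add_mul, mul_one_div_cancel hv0, one_mul],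
    show v * (1 / v) = 1 by rw [mul_one_div_cancel hv0], ENNReal.rpow_one]
  ring

set_option maxHeartbeats 2000000 in
/-- local `L^v` estimate for the bilinear average via powered maximal operators. -/
theorem bilinear_average_maximal (n : ℕ) (v : ℝ) (hv : 1 ≤ v) :
    ∃ C : ℝ≥0∞, 0 < C ∧ C ≠ ∞ ∧
      ∀ (l : ℤ) (k : Fin n → ℤ) (f₁ f₂ : E n → ℝ≥0∞),
        Measurable f₁ → Measurable f₂ →
        lqNorm v (DyadicCube n l k)
            (fun z => ∫⁻ y in ball (0 : E n) ((2 : ℝ) ^ (-l)), f₁ (z + y) * f₂ (z - y)) ≤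
          C * volume (ball (0 : E n) ((2 : ℝ) ^ (-l))) ^ (1 + 1 / v) *
            (⨅ y₁ ∈ DyadicCube n l k, powMax n v f₁ y₁) *
            (⨅ y₂ ∈ DyadicCube n l k, powMax n v f₂ y₂) := by
  have hv0 : (0:ℝ) < v := by linarith
  have h1v : (0:ℝ) < 1 / v := by positivity
  set c₁ : ℝ := Real.sqrt n + 1 with hc₁
  set c₂ : ℝ := 2 * Real.sqrt n + 3 with hc₂
  have hsq : (0:ℝ) ≤ Real.sqrt n := Real.sqrt_nonneg n
  have hc₁0 : (0:ℝ) < c₁ := by simp [hc₁]; linarith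
  have hc₂0 : (0:ℝ) < c₂ := by simp [hc₂]; linarith
  set κ₁ : ℝ≥0∞ := ENNReal.ofReal (c₁ ^ n) with hκ₁
  set κ₂ : ℝ≥0∞ := ENNReal.ofReal (c₂ ^ n) with hκ₂
  have hκ₁0 : κ₁ ≠ 0 := by
    simp only [hκ₁, ne_eq, ENNReal.ofReal_eq_zero, not_le]
    exact pow_pos hc₁0 n
  have hκ₂0 : κ₂ ≠ 0 := by
    simp only [hκ₂, ne_eq, ENNReal.ofReal_eq_zero, not_le]
    exact pow_pos hc₂0 n
  refine ⟨(κ₁ * κ₂) ^ (1 / v), ?_, ?_, ?_⟩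
  · exact ENNReal.rpow_pos (pos_iff_ne_zero.mpr (mul_ne_zero hκ₁0 hκ₂0)) (by finiteness)
  · exact ENNReal.rpow_ne_top_of_nonneg h1v.le (by finiteness)
  intro l k f₁ f₂ hf₁ hf₂
  set C : ℝ≥0∞ := (κ₁ * κ₂) ^ (1 / v) with hC
  set r : ℝ := (2 : ℝ) ^ (-l) with hrdef
  have hr : (0:ℝ) < r := by positivity
  set Q : Set (E n) := DyadicCube n l k with hQdef
  set B : Set (E n) := ball (0 : E n) r with hBdef
  set volB : ℝ≥0∞ := volume B with hvolB
  have hvolB0 : volB ≠ 0 := (measure_ball_pos volume _ hr).ne'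
  have hvolBt : volB ≠ ∞ := measure_ball_lt_top.ne
  have hQmeas : MeasurableSet Q := by
    have : Q = ⋂ i, (fun y : E n => y i) ⁻¹' Set.Ico ((k i : ℝ) * r) ((k i : ℝ) * r + r) := by
      ext y
      simp [hQdef, DyadicCube, Cube, Set.mem_iInter, Set.mem_Ico, hrdef]
    rw [this]
    exact MeasurableSet.iInter fun i =>
      ((EuclideanSpace.proj (𝕜 := ℝ) i).continuous.measurable) measurableSet_Ico
  have hdiam : ∀ z ∈ Q, ∀ q ∈ Q, dist z q ≤ Real.sqrt n * r := by
    intro z hz q hq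
    rw [EuclideanSpace.dist_eq]
    have hb : ∀ i, dist (z i) (q i) ≤ r := by
      intro i
      have h1 := hz i
      have h2 := hq i
      rw [Real.dist_eq, abs_le]
      constructor <;> [linarith [h1.1, h2.2]; linarith [h1.2, h2.1]]
    have hsum : (∑ i, dist (z i) (q i) ^ 2) ≤ ∑ _i : Fin n, r ^ 2 :=
      Finset.sum_le_sum fun i _ => by
        have := hb i
        have := dist_nonneg (x := z i) (y := q i)
        nlinarith
    calc Real.sqrt (∑ i, dist (z i) (q i) ^ 2) ≤ Real.sqrt (∑ _i : Fin n, r ^ 2) :=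
          Real.sqrt_le_sqrt hsum
      _ = Real.sqrt n * r := by
          rw [Finset.sum_const, Finset.card_univ, Fintype.card_fin, nsmul_eq_mul,
            Real.sqrt_mul (by positivity), Real.sqrt_sq hr.le]
  -- membership of translates in balls
  have hmem_add : ∀ z ∈ Q, ∀ y ∈ B, ∀ q ∈ Q, z + y ∈ ball q (c₁ * r) := by
    intro z hz y hy q hq
    rw [mem_ball]
    have h1 : dist (z + y) z = ‖y‖ := by
      rw [dist_eq_norm]
      simp
    have h2 : ‖y‖ < r := by rwa [hBdef, mem_ball_zero_iff] at hy
    calc dist (z + y) q ≤ dist (z + y) z + dist z q := dist_triangle _ _ _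
      _ < r + Real.sqrt n * r := by
          have := hdiam z hz q hq
          rw [h1]; linarith
      _ = c₁ * r := by rw [hc₁]; ring
  have hmem_sub : ∀ z ∈ Q, ∀ y ∈ B, ∀ q ∈ Q, z - y ∈ ball q (c₁ * r) := by
    intro z hz y hy q hq
    rw [mem_ball]
    have h1 : dist (z - y) z = ‖y‖ := by
      rw [dist_eq_norm]
      simp
    have h2 : ‖y‖ < r := by rwa [hBdef, mem_ball_zero_iff] at hy
    calc dist (z - y) q ≤ dist (z - y) z + dist z q := dist_triangle _ _ _
      _ < r + Real.sqrt n * r := by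
          have := hdiam z hz q hq
          rw [h1]; linarith
      _ = c₁ * r := by rw [hc₁]; ring
  set F₁ : E n → ℝ≥0∞ := fun w => f₁ w ^ v with hF₁def
  set F₂ : E n → ℝ≥0∞ := fun w => f₂ w ^ v with hF₂def
  have hF₁ : Measurable F₁ := hf₁.pow_const v
  have hF₂ : Measurable F₂ := hf₂.pow_const v
  -- ball volumes
  have hballvol : ∀ (q : E n) (c : ℝ), 0 < c →
      volume (ball q (c * r)) = ENNReal.ofReal (c ^ n) * volB := by
    intro q c hc
    rw [hvolB, hBdef, Measure.addHaar_ball_mul_of_pos volume q hc r, finrank_euclideanSpace_fin]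
  -- the main core estimate
  have hcore : ∀ q₁ ∈ Q, ∀ q₂ ∈ Q,
      lqNorm v Q (fun z => ∫⁻ y in B, f₁ (z + y) * f₂ (z - y)) ≤
        C * volB ^ (1 + 1 / v) * powMax n v f₁ q₁ * powMax n v f₂ q₂ := by
    intro q₁ hq₁ q₂ hq₂
    have hA : ∀ z : E n, (∫⁻ y in B, f₁ (z + y) * f₂ (z - y)) ^ v ≤
        (∫⁻ y in B, F₁ (z + y) * F₂ (z - y)) * volB ^ (v - 1) := by
      intro z
      have hg : AEMeasurable (fun y => f₁ (z + y) * f₂ (z - y)) (volume.restrict B) :=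
        ((hf₁.comp (measurable_const.add measurable_id)).mul
          (hf₂.comp (measurable_const.sub measurable_id))).aemeasurable
      have h := aux_holder_one (volume.restrict B) hv hg
      rw [Measure.restrict_apply_univ] at h
      have h2 := ENNReal.rpow_le_rpow h hv0.le
      rw [ENNReal.mul_rpow_of_nonneg _ _ hv0.le, ← ENNReal.rpow_mul, ← ENNReal.rpow_mul,
        one_div_mul_cancel hv0.ne', ENNReal.rpow_one,
        show (1 - 1 / v) * v = v - 1 by rw [sub_mul, one_mul, one_div_mul_cancel hv0.ne'],
        show ∫⁻ y in B, (f₁ (z + y) * f₂ (z - y)) ^ v = ∫⁻ y in B, F₁ (z + y) * F₂ (z - y) from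
          lintegral_congr fun y => ENNReal.mul_rpow_of_nonneg _ _ hv0.le] at h2
      exact h2
    have hT : ∫⁻ z in Q, (∫⁻ y in B, f₁ (z + y) * f₂ (z - y)) ^ v ≤
        (∫⁻ z in Q, ∫⁻ y in B, F₁ (z + y) * F₂ (z - y)) * volB ^ (v - 1) := by
      calc ∫⁻ z in Q, (∫⁻ y in B, f₁ (z + y) * f₂ (z - y)) ^ v
          ≤ ∫⁻ z in Q, (∫⁻ y in B, F₁ (z + y) * F₂ (z - y)) * volB ^ (v - 1) :=
            lintegral_mono fun z => hA z
        _ = _ := lintegral_mul_const' _ _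
            (ENNReal.rpow_ne_top_of_nonneg (by linarith) hvolBt)
    have hswap : (∫⁻ z in Q, ∫⁻ y in B, F₁ (z + y) * F₂ (z - y)) =
        ∫⁻ y in B, ∫⁻ z in Q, F₁ (z + y) * F₂ (z - y) := by
      refine lintegral_lintegral_swap ?_
      exact ((hF₁.comp (measurable_fst.add measurable_snd)).mul
        (hF₂.comp (measurable_fst.sub measurable_snd))).aemeasurable
    have htrans : ∀ y ∈ B, (∫⁻ z in Q, F₁ (z + y) * F₂ (z - y)) ≤
        ∫⁻ u in ball q₁ (c₁ * r), F₁ u * F₂ (u - y - y) := by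
      intro y hy
      have hsub : Q ⊆ (fun z => z + y) ⁻¹' ball q₁ (c₁ * r) := fun z hz =>
        hmem_add z hz y hy q₁ hq₁
      calc (∫⁻ z in Q, F₁ (z + y) * F₂ (z - y))
          = ∫⁻ z in Q, F₁ (z + y) * F₂ (z + y - y - y) := by
            refine lintegral_congr fun z => ?_
            rw [add_sub_cancel_right]
        _ ≤ ∫⁻ z in (fun z => z + y) ⁻¹' ball q₁ (c₁ * r),
              F₁ (z + y) * F₂ (z + y - y - y) := lintegral_mono_set hsub
        _ = ∫⁻ u in ball q₁ (c₁ * r), F₁ u * F₂ (u - y - y) := by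
            exact (measurePreserving_add_right volume y).setLIntegral_comp_preimage_emb
              (MeasurableEquiv.addRight y).measurableEmbedding
              (fun u => F₁ u * F₂ (u - y - y)) _
    have hscale : ∀ u ∈ ball q₁ (c₁ * r),
        (∫⁻ y in B, F₂ (u - y - y)) ≤ volume (ball q₂ (c₂ * r)) * powMax n v f₂ q₂ ^ v := by
      intro u hu
      set g₂ : E n → ℝ≥0∞ := (ball (0 : E n) (2 * r)).indicator (fun t => F₂ (u - t)) with hg₂
      have hmg₂ : Measurable g₂ :=
        (hF₂.comp (measurable_const.sub measurable_id)).indicator measurableSet_ball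
      have h1 : (∫⁻ y in B, F₂ (u - y - y)) = ∫⁻ y, g₂ ((2:ℝ) • y) := by
        rw [hBdef, ← lintegral_indicator measurableSet_ball]
        refine lintegral_congr fun y => ?_
        by_cases hy : y ∈ ball (0 : E n) r
        · have h2y : (2:ℝ) • y ∈ ball (0 : E n) (2 * r) := by
            rw [mem_ball_zero_iff] at hy ⊢
            rw [norm_smul]
            simp only [Real.norm_ofNat]
            nlinarith [norm_nonneg y]
          rw [Set.indicator_of_mem hy, hg₂, Set.indicator_of_mem h2y]
          congr 1
          rw [two_smul, sub_add_eq_sub_sub]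
        · have h2y : (2:ℝ) • y ∉ ball (0 : E n) (2 * r) := by
            rw [mem_ball_zero_iff] at hy ⊢
            rw [norm_smul]
            simp only [Real.norm_ofNat]
            push_neg at hy ⊢
            nlinarith [norm_nonneg y]
          rw [Set.indicator_of_notMem hy, hg₂, Set.indicator_of_notMem h2y]
      have h2 : (∫⁻ y, g₂ ((2:ℝ) • y)) =
          ENNReal.ofReal |((2:ℝ) ^ Module.finrank ℝ (E n))⁻¹| * ∫⁻ t, g₂ t := by
        rw [← lintegral_map hmg₂ (measurable_const_smul ((2:ℝ))),
          Measure.map_addHaar_smul volume two_ne_zero, lintegral_smul_measure, smul_eq_mul]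
      have h3 : ENNReal.ofReal |((2:ℝ) ^ Module.finrank ℝ (E n))⁻¹| ≤ 1 := by
        rw [abs_of_nonneg (by positivity)]
        refine ENNReal.ofReal_le_one.mpr ?_
        rw [inv_le_one_iff₀]
        right
        exact one_le_pow₀ (by norm_num)
      have h4 : (∫⁻ t, g₂ t) = ∫⁻ w in ball u (2 * r), F₂ w := by
        rw [hg₂, lintegral_indicator measurableSet_ball]
        have hpre : (fun t => u - t) ⁻¹' ball u (2 * r) = ball (0 : E n) (2 * r) := by
          ext t
          simp only [Set.mem_preimage, mem_ball, dist_eq_norm, sub_sub_cancel_left,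
            norm_neg, sub_zero]
        rw [← hpre]
        exact (⟨measurable_const.sub measurable_id,
            Measure.map_sub_left_eq_self volume u⟩ : MeasurePreserving _ _ _)
          |>.setLIntegral_comp_preimage_emb
            (MeasurableEquiv.subLeft u).measurableEmbedding F₂ _
      have h5 : ball u (2 * r) ⊆ ball q₂ (c₂ * r) := by
        intro w hw
        rw [mem_ball] at hw ⊢
        have hd1 : dist u q₁ < c₁ * r := mem_ball.mp hu
        have hd2 : dist q₁ q₂ ≤ Real.sqrt n * r := hdiam q₁ hq₁ q₂ hq₂
        calc dist w q₂ ≤ dist w u + dist u q₁ + dist q₁ q₂ := dist_triangle4 _ _ _ _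
          _ < 2 * r + c₁ * r + Real.sqrt n * r := by linarith
          _ = c₂ * r := by rw [hc₁, hc₂]; ring
      calc (∫⁻ y in B, F₂ (u - y - y))
          = ENNReal.ofReal |((2:ℝ) ^ Module.finrank ℝ (E n))⁻¹| * ∫⁻ t, g₂ t := by
            rw [h1, h2]
        _ ≤ 1 * ∫⁻ t, g₂ t := mul_le_mul_left h3 _
        _ = ∫⁻ w in ball u (2 * r), F₂ w := by rw [one_mul, h4]
        _ ≤ ∫⁻ w in ball q₂ (c₂ * r), F₂ w := lintegral_mono_set h5
        _ ≤ volume (ball q₂ (c₂ * r)) * powMax n v f₂ q₂ ^ v :=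
            aux_le_powMax n hv0 f₂ q₂ (by positivity)
    have hmid : (∫⁻ y in B, ∫⁻ z in Q, F₁ (z + y) * F₂ (z - y)) ≤
        (volume (ball q₁ (c₁ * r)) * powMax n v f₁ q₁ ^ v) *
          (volume (ball q₂ (c₂ * r)) * powMax n v f₂ q₂ ^ v) := by
      set K₂ : ℝ≥0∞ := volume (ball q₂ (c₂ * r)) * powMax n v f₂ q₂ ^ v with hK₂
      calc (∫⁻ y in B, ∫⁻ z in Q, F₁ (z + y) * F₂ (z - y))
          ≤ ∫⁻ y in B, ∫⁻ u in ball q₁ (c₁ * r), F₁ u * F₂ (u - y - y) :=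
            setLIntegral_mono' measurableSet_ball htrans
        _ = ∫⁻ u in ball q₁ (c₁ * r), ∫⁻ y in B, F₁ u * F₂ (u - y - y) := by
            refine lintegral_lintegral_swap ?_
            exact ((hF₁.comp measurable_snd).mul
              (hF₂.comp ((measurable_snd.sub measurable_fst).sub measurable_fst))).aemeasurable
        _ = ∫⁻ u in ball q₁ (c₁ * r), F₁ u * ∫⁻ y in B, F₂ (u - y - y) := by
            refine lintegral_congr fun u => ?_
            exact lintegral_const_mul (F₁ u)
              (hF₂.comp (((measurable_const.sub measurable_id).sub measurable_id)))
        _ ≤ ∫⁻ u in ball q₁ (c₁ * r), F₁ u * K₂ :=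
            setLIntegral_mono' measurableSet_ball fun u hu =>
              mul_le_mul_right (hscale u hu) _
        _ = (∫⁻ u in ball q₁ (c₁ * r), F₁ u) * K₂ := lintegral_mul_const K₂ hF₁
        _ ≤ (volume (ball q₁ (c₁ * r)) * powMax n v f₁ q₁ ^ v) * K₂ :=
            mul_le_mul_left (aux_le_powMax n hv0 f₁ q₁ (by positivity)) _
    have hfinal : ∫⁻ z in Q, (∫⁻ y in B, f₁ (z + y) * f₂ (z - y)) ^ v ≤
        volB ^ (v - 1) * (κ₁ * volB * powMax n v f₁ q₁ ^ v *
          (κ₂ * volB * powMax n v f₂ q₂ ^ v)) := by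
      calc ∫⁻ z in Q, (∫⁻ y in B, f₁ (z + y) * f₂ (z - y)) ^ v
          ≤ (∫⁻ z in Q, ∫⁻ y in B, F₁ (z + y) * F₂ (z - y)) * volB ^ (v - 1) := hT
        _ ≤ ((volume (ball q₁ (c₁ * r)) * powMax n v f₁ q₁ ^ v) *
              (volume (ball q₂ (c₂ * r)) * powMax n v f₂ q₂ ^ v)) * volB ^ (v - 1) := by
            rw [hswap]
            exact mul_le_mul_left hmid _
        _ = volB ^ (v - 1) * (κ₁ * volB * powMax n v f₁ q₁ ^ v *
              (κ₂ * volB * powMax n v f₂ q₂ ^ v)) := by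
            rw [hballvol q₁ c₁ hc₁0, hballvol q₂ c₂ hc₂0]
            ring
    rw [lqNorm]
    calc (∫⁻ z in Q, (∫⁻ y in B, f₁ (z + y) * f₂ (z - y)) ^ v) ^ (1 / v)
        ≤ (volB ^ (v - 1) * (κ₁ * volB * powMax n v f₁ q₁ ^ v *
            (κ₂ * volB * powMax n v f₂ q₂ ^ v))) ^ (1 / v) :=
          ENNReal.rpow_le_rpow hfinal h1v.le
      _ = C * volB ^ (1 + 1 / v) * powMax n v f₁ q₁ * powMax n v f₂ q₂ := by
          rw [aux_alg hv volB κ₁ κ₂ _ _ hvolB0 hvolBt, hC]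
  -- now conclude using the infima
  set i₁ : ℝ≥0∞ := ⨅ y₁ ∈ Q, powMax n v f₁ y₁ with hi₁def
  set i₂ : ℝ≥0∞ := ⨅ y₂ ∈ Q, powMax n v f₂ y₂ with hi₂def
  -- corner point of the cube
  set q₀ : E n := (WithLp.equiv 2 (Fin n → ℝ)).symm (fun i => (k i : ℝ) * r) with hq₀def
  have hq₀Q : q₀ ∈ Q := by
    intro i
    have hr' : (0:ℝ) < (2:ℝ) ^ (-l) := by positivity
    have h : q₀ i = (k i : ℝ) * (2:ℝ) ^ (-l) := rfl
    rw [h]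
    exact ⟨le_refl _, by simpa using hr'⟩
  set c₃ : ℝ := Real.sqrt n + 2 with hc₃
  have hc₃0 : (0:ℝ) < c₃ := by rw [hc₃]; linarith
  set c₄ : ℝ := 2 * Real.sqrt n + 2 with hc₄
  have hc₄0 : (0:ℝ) < c₄ := by rw [hc₄]; linarith
  set D : Set (E n) := ball q₀ (c₃ * r) with hDdef
  have hDsub : ∀ q ∈ Q, D ⊆ ball q (c₄ * r) := by
    intro q hq x hx
    rw [hDdef, mem_ball] at hx
    rw [mem_ball]
    have := hdiam q₀ hq₀Q q hq
    calc dist x q ≤ dist x q₀ + dist q₀ q := dist_triangle _ _ _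
      _ < c₃ * r + Real.sqrt n * r := by linarith
      _ = c₄ * r := by rw [hc₃, hc₄]; ring
  -- vanishing lemmas in the degenerate cases
  have hvanish : ∀ (f : E n → ℝ≥0∞), Measurable f → (⨅ q ∈ Q, powMax n v f q) = 0 →
      volume ({w | f w ≠ 0} ∩ D) = 0 := by
    intro f hf hinf
    set A : ℝ≥0∞ := ∫⁻ w in D, f w ^ v with hA
    set κ₄ : ℝ≥0∞ := ENNReal.ofReal (c₄ ^ n) with hκ₄
    have hκ₄t : κ₄ * volB ≠ ∞ := by finiteness
    have hAbound : ∀ q ∈ Q, A ≤ powMax n v f q ^ v * (κ₄ * volB) := by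
      intro q hq
      calc A ≤ ∫⁻ w in ball q (c₄ * r), f w ^ v := lintegral_mono_set (hDsub q hq)
        _ ≤ volume (ball q (c₄ * r)) * powMax n v f q ^ v :=
            aux_le_powMax n hv0 f q (by positivity)
        _ = powMax n v f q ^ v * (κ₄ * volB) := by rw [hballvol q c₄ hc₄0]; ring
    have hm : (A / (κ₄ * volB)) ^ (1 / v) ≤ ⨅ q ∈ Q, powMax n v f q := by
      refine le_iInf₂ fun q hq => ?_
      have h1 : A / (κ₄ * volB) ≤ powMax n v f q ^ v :=
        ENNReal.div_le_of_le_mul (hAbound q hq)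
      have h2 := ENNReal.rpow_le_rpow h1 h1v.le
      rwa [← ENNReal.rpow_mul, mul_one_div_cancel hv0.ne', ENNReal.rpow_one] at h2
    rw [hinf, le_zero_iff, ENNReal.rpow_eq_zero_iff] at hm
    have hA0 : A = 0 := by
      rcases hm with ⟨h, _⟩ | ⟨_, h⟩
      · rcases (ENNReal.div_eq_zero_iff).mp h with h' | h'
        · exact h'
        · exact absurd h' hκ₄t
      · linarith
    have hae : (fun w => f w ^ v) =ᵐ[volume.restrict D] 0 :=
      (lintegral_eq_zero_iff (hf.pow_const v)).mp hA0
    have hae2 : f =ᵐ[volume.restrict D] 0 := by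
      filter_upwards [hae] with x hx
      simp only [Pi.zero_apply] at hx ⊢
      rcases ENNReal.rpow_eq_zero_iff.mp hx with ⟨h, _⟩ | ⟨_, h⟩
      · exact h
      · linarith
    have hmeasS : MeasurableSet {w | f w ≠ 0} :=
      (hf (measurableSet_singleton 0)).compl
    have := ae_iff.mp hae2
    rw [Measure.restrict_apply (by simpa using hmeasS)] at this
    simpa using this
  -- case distinction
  by_cases hi₁z : i₁ = 0
  · -- f₁ vanishes a.e. on D; LHS is zero
    have hDzero := hvanish f₁ hf₁ (by rw [← hi₁def]; exact hi₁z)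
    have hzero : ∀ z ∈ Q, (∫⁻ y in B, f₁ (z + y) * f₂ (z - y)) = 0 := by
      intro z hz
      have hmp : MeasurePreserving (fun y : E n => z + y) volume volume :=
        measurePreserving_add_left volume z
      have hN : volume ((fun y : E n => z + y) ⁻¹' ({w | f₁ w ≠ 0} ∩ D)) = 0 := by
        rw [hmp.measure_preimage
          (show NullMeasurableSet ({w | f₁ w ≠ 0} ∩ D) volume from
            ((hf₁ (measurableSet_singleton 0)).compl.inter measurableSet_ball).nullMeasurableSet)]
        exact hDzero
      have hael : ∀ᵐ y ∂(volume.restrict B), f₁ (z + y) * f₂ (z - y) = 0 := by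
        filter_upwards [ae_restrict_mem measurableSet_ball,
          ae_restrict_of_ae (measure_eq_zero_iff_ae_notMem.mp hN)] with y hyB hyN
        have hzD : z + y ∈ D := by
          rw [hDdef, mem_ball]
          have h1 : dist (z + y) z = ‖y‖ := by rw [dist_eq_norm]; simp
          have h2 : ‖y‖ < r := by rwa [mem_ball_zero_iff] at hyB
          have h3 : dist z q₀ ≤ Real.sqrt n * r := hdiam z hz q₀ hq₀Q
          calc dist (z + y) q₀ ≤ dist (z + y) z + dist z q₀ := dist_triangle _ _ _
            _ < r + Real.sqrt n * r := by rw [h1]; linarith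
            _ ≤ c₃ * r := by rw [hc₃]; nlinarith
        have : f₁ (z + y) = 0 := by
          by_contra h
          exact hyN ⟨h, hzD⟩
        rw [this, zero_mul]
      calc (∫⁻ y in B, f₁ (z + y) * f₂ (z - y)) = ∫⁻ _y in B, 0 :=
            lintegral_congr_ae hael
        _ = 0 := lintegral_zero
    have hLHS : lqNorm v Q (fun z => ∫⁻ y in B, f₁ (z + y) * f₂ (z - y)) = 0 := by
      rw [lqNorm]
      have : (∫⁻ z in Q, (∫⁻ y in B, f₁ (z + y) * f₂ (z - y)) ^ v) = ∫⁻ _z in Q, 0 :=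
        setLIntegral_congr_fun hQmeas (fun z hz => by
          rw [hzero z hz, ENNReal.zero_rpow_of_pos hv0])
      rw [this, lintegral_zero, ENNReal.zero_rpow_of_pos h1v]
    rw [hLHS]
    exact zero_le
  by_cases hi₂z : i₂ = 0
  · have hDzero := hvanish f₂ hf₂ (by rw [← hi₂def]; exact hi₂z)
    have hzero : ∀ z ∈ Q, (∫⁻ y in B, f₁ (z + y) * f₂ (z - y)) = 0 := by
      intro z hz
      have hmp : MeasurePreserving (fun y : E n => z - y) volume volume :=
        ⟨measurable_const.sub measurable_id, Measure.map_sub_left_eq_self volume z⟩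
      have hN : volume ((fun y : E n => z - y) ⁻¹' ({w | f₂ w ≠ 0} ∩ D)) = 0 := by
        rw [hmp.measure_preimage
          (show NullMeasurableSet ({w | f₂ w ≠ 0} ∩ D) volume from
            ((hf₂ (measurableSet_singleton 0)).compl.inter measurableSet_ball).nullMeasurableSet)]
        exact hDzero
      have hael : ∀ᵐ y ∂(volume.restrict B), f₁ (z + y) * f₂ (z - y) = 0 := by
        filter_upwards [ae_restrict_mem measurableSet_ball,
          ae_restrict_of_ae (measure_eq_zero_iff_ae_notMem.mp hN)] with y hyB hyN
        have hzD : z - y ∈ D := by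
          rw [hDdef, mem_ball]
          have h1 : dist (z - y) z = ‖y‖ := by rw [dist_eq_norm]; simp
          have h2 : ‖y‖ < r := by rwa [mem_ball_zero_iff] at hyB
          have h3 : dist z q₀ ≤ Real.sqrt n * r := hdiam z hz q₀ hq₀Q
          calc dist (z - y) q₀ ≤ dist (z - y) z + dist z q₀ := dist_triangle _ _ _
            _ < r + Real.sqrt n * r := by rw [h1]; linarith
            _ ≤ c₃ * r := by rw [hc₃]; nlinarith
        have : f₂ (z - y) = 0 := by
          by_contra h
          exact hyN ⟨h, hzD⟩
        rw [this, mul_zero]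
      calc (∫⁻ y in B, f₁ (z + y) * f₂ (z - y)) = ∫⁻ _y in B, 0 :=
            lintegral_congr_ae hael
        _ = 0 := lintegral_zero
    have hLHS : lqNorm v Q (fun z => ∫⁻ y in B, f₁ (z + y) * f₂ (z - y)) = 0 := by
      rw [lqNorm]
      have : (∫⁻ z in Q, (∫⁻ y in B, f₁ (z + y) * f₂ (z - y)) ^ v) = ∫⁻ _z in Q, 0 :=
        setLIntegral_congr_fun hQmeas (fun z hz => by
          rw [hzero z hz, ENNReal.zero_rpow_of_pos hv0])
      rw [this, lintegral_zero, ENNReal.zero_rpow_of_pos h1v]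
    rw [hLHS]
    exact zero_le
  -- both infima are nonzero
  set K : ℝ≥0∞ := C * volB ^ (1 + 1 / v) with hK
  have hC0 : C ≠ 0 := by
    rw [hC]
    exact (ENNReal.rpow_pos (pos_iff_ne_zero.mpr (mul_ne_zero hκ₁0 hκ₂0)) (by finiteness)).ne'
  have hCt : C ≠ ∞ := by
    rw [hC]
    exact ENNReal.rpow_ne_top_of_nonneg h1v.le (by finiteness)
  have hK0 : K ≠ 0 := by
    rw [hK]
    exact mul_ne_zero hC0 (ENNReal.rpow_pos (hvolB0.bot_lt) hvolBt).ne'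
  have hKt : K ≠ ∞ := by
    rw [hK]
    exact ENNReal.mul_ne_top hCt (ENNReal.rpow_ne_top_of_nonneg (by positivity) hvolBt)
  show lqNorm v Q (fun z => ∫⁻ y in B, f₁ (z + y) * f₂ (z - y)) ≤ K * i₁ * i₂
  by_cases hi₁t : i₁ = ∞
  · rw [hi₁t, ENNReal.mul_top hK0, ENNReal.top_mul hi₂z]
    exact le_top
  by_cases hi₂t : i₂ = ∞
  · rw [hi₂t, ENNReal.mul_top (mul_ne_zero hK0 hi₁z)]
    exact le_top
  refine ENNReal.le_of_forall_pos_le_add fun ε hε _ => ?_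
  set d : ℝ≥0∞ := K * (i₁ + i₂ + 1) with hd
  have hd0 : d ≠ 0 := by
    rw [hd]
    exact mul_ne_zero hK0 (by simp)
  have hdt : d ≠ ∞ := by
    rw [hd]
    exact ENNReal.mul_ne_top hKt (by
      refine ENNReal.add_ne_top.mpr ⟨ENNReal.add_ne_top.mpr ⟨hi₁t, hi₂t⟩, one_ne_top⟩)
  set e : ℝ≥0∞ := min 1 ((ε : ℝ≥0∞) / d) with he
  have he0 : e ≠ 0 := by
    rw [he]
    exact (lt_min one_pos (ENNReal.div_pos (ENNReal.coe_ne_zero.mpr hε.ne') hdt)).ne'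
  have he1 : e ≤ 1 := min_le_left _ _
  obtain ⟨p₁, hp₁Q, hp₁⟩ : ∃ p ∈ Q, powMax n v f₁ p < i₁ + e := by
    have : i₁ < i₁ + e := ENNReal.lt_add_right hi₁t he0
    rw [hi₁def] at this
    simp only [iInf_lt_iff] at this
    obtain ⟨p, hpQ, hp⟩ := this
    exact ⟨p, hpQ, hp⟩
  obtain ⟨p₂, hp₂Q, hp₂⟩ : ∃ p ∈ Q, powMax n v f₂ p < i₂ + e := by
    have : i₂ < i₂ + e := ENNReal.lt_add_right hi₂t he0
    rw [hi₂def] at this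
    simp only [iInf_lt_iff] at this
    obtain ⟨p, hpQ, hp⟩ := this
    exact ⟨p, hpQ, hp⟩
  have hmain := hcore p₁ hp₁Q p₂ hp₂Q
  calc lqNorm v Q (fun z => ∫⁻ y in B, f₁ (z + y) * f₂ (z - y))
      ≤ C * volB ^ (1 + 1 / v) * powMax n v f₁ p₁ * powMax n v f₂ p₂ := hmain
    _ ≤ K * ((i₁ + e) * (i₂ + e)) := by
        rw [hK, mul_assoc]
        exact mul_le_mul_right (mul_le_mul' hp₁.le hp₂.le) _
    _ = K * i₁ * i₂ + (K * (i₁ * e + e * i₂ + e * e)) := by ring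
    _ ≤ K * i₁ * i₂ + e * d := by
        refine add_le_add_right ?_ _
        rw [hd]
        calc K * (i₁ * e + e * i₂ + e * e) = e * (K * (i₁ + i₂ + e)) := by ring
          _ ≤ e * (K * (i₁ + i₂ + 1)) := by
              exact mul_le_mul_right (mul_le_mul_right (add_le_add_right he1 _) _) _
    _ ≤ K * i₁ * i₂ + ε := by
        refine add_le_add_right ?_ _
        rw [he]
        calc min 1 ((ε : ℝ≥0∞) / d) * d ≤ ((ε : ℝ≥0∞) / d) * d :=
              mul_le_mul_left (min_le_right _ _) _
          _ = ε := ENNReal.div_mul_cancel hd0 hdt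
end
end
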